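/- arXiv:math/0505093 — 2 statements merged into one kernel-verified Lean document; each statement's English description precedes it below -/
import Mathlib

section
/- The sum over k ≥ 1 of 1/(k^2 * binomial(2k, k)) equals ζ(2)/3, i.e., ζ(2) = 3 ∑_{k=1}^∞ 1/(k^2 C(2k,k)). -/
open scoped BigOperators

noncomputable def P (r k : ℕ) : ℝ :=
  if r = 0 then 1 else ∑ j ∈ Finset.Icc 1 (k-1), 1 / (j:ℝ)^r

noncomputable def lam (m : ℕ) (f : ℕ → ℝ) : ℝ :=
  ∑' k : ℕ, (-1)^k * f (k+1) / (((k:ℝ)+1)^m * ((2*(k+1)).choose (k+1)))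

noncomputable def mu (m : ℕ) (f : ℕ → ℝ) : ℝ :=
  ∑' k : ℕ, f (k+1) / (((k:ℝ)+1)^m * ((2*(k+1)).choose (k+1)))

/-! Auxiliary development for the Apéry-style acceleration of ζ(2). -/

noncomputable def gg (n m : ℕ) : ℝ :=
  (n.factorial : ℝ)^4 * (m.factorial)^2 / ((2*n).factorial * ((m+n+1).factorial)^2)

noncomputable def hh (n m : ℕ) : ℝ :=
  (n.factorial : ℝ)^4 * (m.factorial)^2 * (2*m+3*n) / ((2*n).factorial * ((m+n).factorial)^2 * n^3)

lemma gg_nonneg (n m : ℕ) : 0 ≤ gg n m := by unfold gg; positivity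

lemma hh_nonneg (n m : ℕ) : 0 ≤ hh n m := by unfold hh; positivity

lemma gg_zero (m : ℕ) : gg 0 m = 1/((m:ℝ)+1)^2 := by
  simp only [gg]
  have e : (m+0+1).factorial = (m+1) * m.factorial := by
    rw [Nat.add_zero, Nat.factorial_succ]
  rw [e]
  have hf2 : (m.factorial : ℝ) ≠ 0 := Nat.cast_ne_zero.mpr m.factorial_ne_zero
  push_cast
  field_simp
  ring

lemma key (n m : ℕ) : gg n m - gg (n+1) m = hh (n+1) m - hh (n+1) (m+1) := by
  have e1 : (2*(n+1)).factorial = (2*n+2) * ((2*n+1) * (2*n).factorial) := by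
    have : 2*(n+1) = (2*n+1)+1 := by ring
    rw [this, Nat.factorial_succ, Nat.factorial_succ]
  have e2 : (n+1).factorial = (n+1) * n.factorial := Nat.factorial_succ n
  have e3 : (m+1).factorial = (m+1) * m.factorial := Nat.factorial_succ m
  have e4 : (m+(n+1)+1).factorial = (m+n+2) * (m+n+1).factorial := by
    have : m+(n+1)+1 = (m+n+1)+1 := by ring
    rw [this, Nat.factorial_succ]
  have e5 : (m+(n+1)).factorial = (m+n+1).factorial := by ring_nf
  have e6 : (m+1+(n+1)).factorial = (m+n+2) * (m+n+1).factorial := by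
    have : m+1+(n+1) = (m+n+1)+1 := by ring
    rw [this, Nat.factorial_succ]
  have hf1 : (n.factorial : ℝ) ≠ 0 := Nat.cast_ne_zero.mpr n.factorial_ne_zero
  have hf2 : (m.factorial : ℝ) ≠ 0 := Nat.cast_ne_zero.mpr m.factorial_ne_zero
  have hf3 : ((2*n).factorial : ℝ) ≠ 0 := Nat.cast_ne_zero.mpr (2*n).factorial_ne_zero
  have hf4 : ((m+n+1).factorial : ℝ) ≠ 0 := Nat.cast_ne_zero.mpr (m+n+1).factorial_ne_zero
  have hn1 : ((n:ℝ)+1) ≠ 0 := by positivity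
  have h2n1 : (2*(n:ℝ)+1) ≠ 0 := by positivity
  have h2n2 : (2*(n:ℝ)+2) ≠ 0 := by positivity
  have hmn2 : ((m:ℝ)+(n:ℝ)+2) ≠ 0 := by positivity
  simp only [gg, hh, e1, e2, e3, e4, e5, e6]
  push_cast
  field_simp
  ring

lemma gg_le (n m : ℕ) : gg n m ≤ 1/((m:ℝ)+1)^2 := by
  unfold gg
  rw [div_le_div_iff₀ (by positivity) (by positivity)]
  have h1 : n.factorial * n.factorial ≤ (2*n).factorial := by
    have := Nat.factorial_mul_factorial_dvd_factorial_add n n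
    rw [← two_mul] at this
    exact Nat.le_of_dvd (2*n).factorial_pos this
  have h2 : n.factorial * (m+1).factorial ≤ (m+n+1).factorial := by
    have := Nat.factorial_mul_factorial_dvd_factorial_add n (m+1)
    have e : n + (m+1) = m+n+1 := by ring
    rw [e] at this
    exact Nat.le_of_dvd (m+n+1).factorial_pos this
  have h2' : ((n.factorial : ℝ) * (((m:ℝ)+1) * m.factorial)) ≤ ((m+n+1).factorial : ℝ) := by
    rw [show (m+1).factorial = (m+1)*m.factorial from Nat.factorial_succ m] at h2
    exact_mod_cast h2
  have h1' : ((n.factorial : ℝ) * n.factorial) ≤ ((2*n).factorial : ℝ) := by exact_mod_cast h1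
  have p1 : (0:ℝ) ≤ (n.factorial : ℝ) * (((m:ℝ)+1) * m.factorial) := by positivity
  have key : ((n.factorial : ℝ) * n.factorial) *
      (((n.factorial : ℝ) * (((m:ℝ)+1) * m.factorial)) * ((n.factorial : ℝ) * (((m:ℝ)+1) * m.factorial)))
      ≤ ((2*n).factorial : ℝ) * (((m+n+1).factorial : ℝ) * ((m+n+1).factorial : ℝ)) := by
    apply mul_le_mul h1' (mul_le_mul h2' h2' p1 (by positivity)) (by positivity) (by positivity)
  nlinarith [key]

lemma fact_ineq (n : ℕ) : (n+1) * (n.factorial * n.factorial) ≤ (2*n).factorial := by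
  induction n with
  | zero => simp
  | succ n ih =>
    have e1 : (2*(n+1)).factorial = (2*n+2) * ((2*n+1) * (2*n).factorial) := by
      have : 2*(n+1) = (2*n+1)+1 := by ring
      rw [this, Nat.factorial_succ, Nat.factorial_succ]
    rw [e1, Nat.factorial_succ]
    have h2 : (n+1+1) * (n+1) ≤ (2*n+2) * (2*n+1) := by nlinarith [Nat.zero_le n]
    calc (n+1+1) * ((n+1) * n.factorial * ((n+1) * n.factorial))
        = ((n+1+1) * (n+1)) * ((n+1) * (n.factorial * n.factorial)) := by ring
      _ ≤ ((2*n+2) * (2*n+1)) * ((n+1) * (n.factorial * n.factorial)) := Nat.mul_le_mul_right _ h2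
      _ ≤ ((2*n+2) * (2*n+1)) * (2*n).factorial := Nat.mul_le_mul_left _ ih
      _ = (2*n+2) * ((2*n+1) * (2*n).factorial) := by ring

lemma gg_le' (n m : ℕ) : gg n m ≤ (1/((n:ℝ)+1)) * (1/((m:ℝ)+1)^2) := by
  have e : (1/((n:ℝ)+1)) * (1/((m:ℝ)+1)^2) = 1 / (((n:ℝ)+1)*((m:ℝ)+1)^2) := by
    rw [div_mul_div_comm, one_mul]
  rw [e]
  unfold gg
  rw [div_le_div_iff₀ (by positivity) (by positivity)]
  have h1 : ((n:ℝ)+1) * ((n.factorial:ℝ) * n.factorial) ≤ ((2*n).factorial : ℝ) := by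
    exact_mod_cast fact_ineq n
  have h2 : ((n.factorial : ℝ) * (((m:ℝ)+1) * m.factorial)) ≤ ((m+n+1).factorial : ℝ) := by
    have hdvd : n.factorial * (m+1).factorial ∣ (m+n+1).factorial := by
      have := Nat.factorial_mul_factorial_dvd_factorial_add n (m+1)
      rwa [show n + (m+1) = m+n+1 by ring] at this
    have h := Nat.le_of_dvd (m+n+1).factorial_pos hdvd
    rw [show (m+1).factorial = (m+1)*m.factorial from Nat.factorial_succ m] at h
    exact_mod_cast h
  have key : (((n:ℝ)+1) * ((n.factorial:ℝ) * n.factorial)) *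
      (((n.factorial : ℝ) * (((m:ℝ)+1) * m.factorial)) * ((n.factorial : ℝ) * (((m:ℝ)+1) * m.factorial)))
      ≤ ((2*n).factorial : ℝ) * (((m+n+1).factorial : ℝ) * ((m+n+1).factorial : ℝ)) :=
    mul_le_mul h1 (mul_le_mul h2 h2 (by positivity) (by positivity)) (by positivity) (by positivity)
  nlinarith [key]

lemma gg_anti (n m : ℕ) : gg (n+1) m ≤ gg n m := by
  have e1 : (2*(n+1)).factorial = (2*n+2) * ((2*n+1) * (2*n).factorial) := by
    have : 2*(n+1) = (2*n+1)+1 := by ring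
    rw [this, Nat.factorial_succ, Nat.factorial_succ]
  have e2 : (n+1).factorial = (n+1) * n.factorial := Nat.factorial_succ n
  have e4 : (m+(n+1)+1).factorial = (m+n+2) * (m+n+1).factorial := by
    have : m+(n+1)+1 = (m+n+1)+1 := by ring
    rw [this, Nat.factorial_succ]
  simp only [gg, e1, e2, e4]
  push_cast
  rw [div_le_div_iff₀ (by positivity) (by positivity)]
  have hn : (0:ℝ) ≤ n := Nat.cast_nonneg n
  have hm : (0:ℝ) ≤ m := Nat.cast_nonneg m
  have ha : ((n:ℝ)+1)^2 ≤ (2*(n:ℝ)+2)*(2*(n:ℝ)+1) := by nlinarith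
  have hb : ((n:ℝ)+1)^2 ≤ ((m:ℝ)+(n:ℝ)+2)^2 := by nlinarith
  have key : ((n:ℝ)+1)^4 ≤ (2*(n:ℝ)+2)*(2*(n:ℝ)+1)*((m:ℝ)+(n:ℝ)+2)^2 := by
    calc ((n:ℝ)+1)^4 = ((n:ℝ)+1)^2 * ((n:ℝ)+1)^2 := by ring
      _ ≤ ((2*(n:ℝ)+2)*(2*(n:ℝ)+1)) * ((m:ℝ)+(n:ℝ)+2)^2 :=
          mul_le_mul ha hb (by positivity) (by nlinarith)
  have hX : (0:ℝ) ≤ (n.factorial:ℝ)^4 * (m.factorial)^2 * ((2*n).factorial * ((m+n+1).factorial)^2) := by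
    positivity
  nlinarith [mul_le_mul_of_nonneg_right key hX]

lemma hh_le (n m : ℕ) : hh (n+1) m ≤
    (((n+1).factorial:ℝ)^4 * (3*n+5)) / ((2*(n+1)).factorial * ((n:ℝ)+1)^3 * ((m:ℝ)+1)) := by
  have hnat : (m.factorial)^2 * (2*m+3*(n+1)) * (m+1) ≤ (3*n+5) * ((m+n+1).factorial)^2 := by
    have h1' : (m+1) * m.factorial ≤ (m+n+1).factorial := by
      rw [← Nat.factorial_succ]; exact Nat.factorial_le (by omega)
    have h0 : 2*m+3*(n+1) ≤ (3*n+5)*(m+1) := by nlinarith [Nat.zero_le (n*m)]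
    have h2 : (2*m+3*(n+1)) * (m+1) ≤ (3*n+5)*((m+1)*(m+1)) := by
      calc (2*m+3*(n+1)) * (m+1) ≤ ((3*n+5)*(m+1)) * (m+1) := Nat.mul_le_mul_right _ h0
        _ = (3*n+5)*((m+1)*(m+1)) := by ring
    calc (m.factorial)^2 * (2*m+3*(n+1)) * (m+1)
        = (m.factorial)^2 * ((2*m+3*(n+1)) * (m+1)) := by ring
      _ ≤ (m.factorial)^2 * ((3*n+5)*((m+1)*(m+1))) := Nat.mul_le_mul_left _ h2
      _ = (3*n+5) * ((m+1) * m.factorial)^2 := by ring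
      _ ≤ (3*n+5) * ((m+n+1).factorial)^2 := Nat.mul_le_mul_left _ (Nat.pow_le_pow_left h1' 2)
  have hnat' : ((m.factorial:ℝ))^2 * (2*(m:ℝ)+3*((n:ℝ)+1)) * ((m:ℝ)+1)
      ≤ (3*(n:ℝ)+5) * (((m+n+1).factorial:ℝ))^2 := by exact_mod_cast hnat
  have e5 : m+(n+1) = m+n+1 := by omega
  simp only [hh, e5]
  rw [div_le_div_iff₀ (by positivity) (by positivity)]
  push_cast
  have hK : (0:ℝ) ≤ ((n+1).factorial:ℝ)^4 * ((2*(n+1)).factorial:ℝ) * ((n:ℝ)+1)^3 := by positivity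
  nlinarith [mul_le_mul_of_nonneg_left hnat' hK]

lemma hh_zero (n : ℕ) : hh (n+1) 0 =
    3 / (((n:ℝ)+1)^2 * ((2*(n+1)).choose (n+1))) := by
  have hc : ((2*(n+1)).choose (n+1)) * (n+1).factorial * (n+1).factorial = (2*(n+1)).factorial := by
    have := Nat.choose_mul_factorial_mul_factorial (show n+1 ≤ 2*(n+1) by omega)
    simpa [show 2*(n+1) - (n+1) = n+1 by omega] using this
  have hc' : (((2*(n+1)).choose (n+1)) : ℝ) * (n+1).factorial * (n+1).factorial
      = ((2*(n+1)).factorial : ℝ) := by exact_mod_cast hc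
  have hfn : ((n+1).factorial : ℝ) ≠ 0 := Nat.cast_ne_zero.mpr (n+1).factorial_ne_zero
  have hf2n : ((2*(n+1)).factorial : ℝ) ≠ 0 := Nat.cast_ne_zero.mpr (2*(n+1)).factorial_ne_zero
  have hcc : (((2*(n+1)).choose (n+1)) : ℝ) ≠ 0 := by
    intro h
    rw [h] at hc'
    simp at hc'
    exact hf2n hc'.symm
  have hn1 : ((n:ℝ)+1) ≠ 0 := by positivity
  simp only [hh]
  rw [← hc']
  have e5 : ((0:ℕ)+(n+1)).factorial = (n+1).factorial := by norm_num
  rw [e5]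
  push_cast
  field_simp
  ring

lemma summable_inv_sq : Summable (fun m : ℕ => 1/((m:ℝ)+1)^2) := by
  have := Real.summable_one_div_nat_pow.mpr (le_refl 2)
  have h2 := (summable_nat_add_iff 1).mpr this
  simpa using h2

lemma summable_gg (n : ℕ) : Summable (gg n) :=
  Summable.of_nonneg_of_le (gg_nonneg n) (gg_le n) summable_inv_sq

lemma hh_tendsto (n : ℕ) :
    Filter.Tendsto (fun m => hh (n+1) m) Filter.atTop (nhds 0) := by
  apply squeeze_zero (fun m => hh_nonneg _ _) (fun m => hh_le n m)
  set C : ℝ := (((n+1).factorial:ℝ)^4 * (3*n+5)) / ((2*(n+1)).factorial * ((n:ℝ)+1)^3) with hC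
  have h1 : Filter.Tendsto (fun m : ℕ => C * (1/((m:ℝ)+1))) Filter.atTop (nhds 0) := by
    simpa using tendsto_one_div_add_atTop_nhds_zero_nat.const_mul C
  refine h1.congr (fun m => ?_)
  rw [hC, div_mul_div_comm, mul_one]

lemma telescope (n : ℕ) :
    HasSum (fun m => gg n m - gg (n+1) m) (hh (n+1) 0) := by
  rw [hasSum_iff_tendsto_nat_of_nonneg (fun m => sub_nonneg.mpr (gg_anti n m))]
  have e : ∀ M : ℕ, ∑ i ∈ Finset.range M, (gg n i - gg (n+1) i)
      = hh (n+1) 0 - hh (n+1) M := by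
    intro M
    rw [Finset.sum_congr rfl (fun i _ => key n i)]
    exact Finset.sum_range_sub' (fun i => hh (n+1) i) M
  simp only [e]
  simpa using tendsto_const_nhds.sub (hh_tendsto n)

noncomputable def R (n : ℕ) : ℝ := ∑' m, gg n m

lemma R_zero : R 0 = ∑' k : ℕ, 1 / ((k:ℝ)+1)^2 :=
  tsum_congr (fun m => by rw [gg_zero])

lemma R_diff (n : ℕ) : R n - R (n+1) = hh (n+1) 0 :=
  HasSum.unique ((summable_gg n).hasSum.sub (summable_gg (n+1)).hasSum) (telescope n)

lemma R_partial (N : ℕ) :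
    R 0 - ∑ k ∈ Finset.range N, hh (k+1) 0 = R N := by
  induction N with
  | zero => simp
  | succ n ih =>
    rw [Finset.sum_range_succ, ← R_diff n]
    linarith

lemma R_nonneg (n : ℕ) : 0 ≤ R n := tsum_nonneg (gg_nonneg n)

lemma R_le (n : ℕ) : R n ≤ (1/((n:ℝ)+1)) * ∑' k : ℕ, 1 / ((k:ℝ)+1)^2 := by
  have h := Summable.tsum_le_tsum (gg_le' n) (summable_gg n)
    ((summable_inv_sq.mul_left (1/((n:ℝ)+1))))
  rwa [tsum_mul_left] at h

lemma R_tendsto : Filter.Tendsto R Filter.atTop (nhds 0) := by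
  apply squeeze_zero R_nonneg R_le
  have h0 := tendsto_one_div_add_atTop_nhds_zero_nat.mul_const (∑' k : ℕ, 1 / ((k:ℝ)+1)^2)
  rw [zero_mul] at h0
  exact h0

theorem zeta_two_apery :
    (∑' k : ℕ, 1 / ((k:ℝ)+1)^2) =
      3 * ∑' k : ℕ, 1 / (((k:ℝ)+1)^2 * ((2*(k+1)).choose (k+1))) := by
  have hs : HasSum (fun k => hh (k+1) 0) (∑' k : ℕ, 1 / ((k:ℝ)+1)^2) := by
    rw [hasSum_iff_tendsto_nat_of_nonneg (fun k => hh_nonneg (k+1) 0)]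
    have e : ∀ N, ∑ k ∈ Finset.range N, hh (k+1) 0 = R 0 - R N := by
      intro N; have := R_partial N; linarith
    simp only [e, R_zero]
    simpa using tendsto_const_nhds.sub R_tendsto
  have hfun : (fun k : ℕ => hh (k+1) 0)
      = (fun k : ℕ => 3 * (1 / (((k:ℝ)+1)^2 * ((2*(k+1)).choose (k+1))))) := by
    funext k
    rw [hh_zero k, mul_one_div]
  rw [hfun] at hs
  calc (∑' k : ℕ, 1 / ((k:ℝ)+1)^2)
      = ∑' k : ℕ, 3 * (1 / (((k:ℝ)+1)^2 * ((2*(k+1)).choose (k+1)))) := hs.tsum_eq.symm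
    _ = 3 * ∑' k : ℕ, 1 / (((k:ℝ)+1)^2 * ((2*(k+1)).choose (k+1))) := tsum_mul_left
end

section
/- ζ(3) = (5/2) ∑_{k=1}^∞ (-1)^{k+1} / (k^3 * C(2k,k)). -/
open scoped BigOperators

noncomputable def apEps (N k : ℕ) : ℝ :=
  (-1)^k * ((k.factorial : ℝ))^2 * (((N-k).factorial : ℝ)) /
    (2 * (k:ℝ)^3 * (((N+k).factorial : ℝ)))

noncomputable def apLmb (N k : ℕ) : ℝ :=
  (-1)^k * ((k.factorial : ℝ))^2 * (((N-1-k).factorial : ℝ)) /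
    ((N:ℝ)^2 * (((N+k).factorial : ℝ)))

lemma apCore (j m : ℕ) :
    apEps (j+m+2) (j+1) - apEps (j+m+1) (j+1) =
      apLmb (j+m+2) j - apLmb (j+m+2) (j+1) := by
  simp only [apEps, apLmb]
  rw [show j+m+2-(j+1) = m+1 by omega, show j+m+1-(j+1) = m by omega,
      show j+m+2-1-j = m+1 by omega, show j+m+2-1-(j+1) = m by omega,
      show j+m+2+(j+1) = (2*j+m+2)+1 by omega, show j+m+1+(j+1) = 2*j+m+2 by omega,
      show j+m+2+j = 2*j+m+2 by omega]
  rw [Nat.factorial_succ (2*j+m+2), Nat.factorial_succ m, Nat.factorial_succ j,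
      pow_succ]
  push_cast
  have hj : ((j:ℝ)+1) ≠ 0 := by positivity
  have hm : ((m.factorial : ℝ)) ≠ 0 := by positivity
  have hjf : ((j.factorial : ℝ)) ≠ 0 := by positivity
  have hB : (((2*j+m+2).factorial : ℝ)) ≠ 0 := by positivity
  have hn : ((j:ℝ)+(m:ℝ)+2) ≠ 0 := by positivity
  have h2 : (2*(j:ℝ)+(m:ℝ)+3) ≠ 0 := by positivity
  field_simp
  ring

lemma apLmb_zero (n : ℕ) : apLmb (n+1) 0 = 1 / ((n:ℝ)+1)^3 := by
  simp only [apLmb]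
  rw [show n+1-1-0 = n by omega, show n+1+0 = n+1 by omega, Nat.factorial_succ]
  push_cast
  have h1 : ((n:ℝ)+1) ≠ 0 := by positivity
  have h2 : ((n.factorial : ℝ)) ≠ 0 := by positivity
  field_simp
  ring

lemma apBdry (n : ℕ) :
    apLmb (n+1) n - apEps (n+1) (n+1) =
      (5/2) * ((-1)^n / (((n:ℝ)+1)^3 * ((2*(n+1)).choose (n+1)))) := by
  have hc := Nat.choose_mul_factorial_mul_factorial (show n+1 ≤ 2*(n+1) by omega)
  rw [show 2*(n+1) - (n+1) = n+1 by omega] at hc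
  have hcR : (((2*(n+1)).choose (n+1) : ℕ) : ℝ) =
      (((2*n+1).factorial : ℝ)) * (2*(n:ℝ)+2) / (((n.factorial : ℝ)) * ((n:ℝ)+1))^2 := by
    have hR := congrArg (fun t : ℕ => (t : ℝ)) hc
    push_cast at hR
    rw [show 2*(n+1) = (2*n+1)+1 by omega, Nat.factorial_succ, Nat.factorial_succ] at hR
    rw [show (2*n+1+1 : ℕ) = 2*(n+1) by omega] at hR
    push_cast at hR
    have h1 : ((n:ℝ)+1) ≠ 0 := by positivity
    have h2 : ((n.factorial : ℝ)) ≠ 0 := by positivity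
    rw [eq_div_iff (by positivity)]
    linear_combination hR
  simp only [apLmb, apEps]
  rw [show n+1-1-n = 0 by omega, show n+1+n = 2*n+1 by omega,
      show n+1-(n+1) = 0 by omega, show n+1+(n+1) = (2*n+1)+1 by omega,
      Nat.factorial_succ (2*n+1), Nat.factorial_succ n, hcR, pow_succ]
  push_cast
  have h1 : ((n:ℝ)+1) ≠ 0 := by positivity
  have h2 : ((n.factorial : ℝ)) ≠ 0 := by positivity
  have h3 : (((2*n+1).factorial : ℝ)) ≠ 0 := by positivity
  have h4 : (2*(n:ℝ)+2) ≠ 0 := by positivity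
  field_simp
  ring

lemma apKey (N : ℕ) :
    ∑ j ∈ Finset.range N, (1:ℝ) / ((j:ℝ)+1)^3 =
      (5/2) * ∑ j ∈ Finset.range N, ((-1)^j / (((j:ℝ)+1)^3 * ((2*(j+1)).choose (j+1))))
        + ∑ j ∈ Finset.range N, apEps N (j+1) := by
  induction N with
  | zero => simp
  | succ n ih =>
    rw [Finset.sum_range_succ, Finset.sum_range_succ, ih,
        Finset.sum_range_succ (fun j => apEps (n+1) (j+1))]
    have htel : ∑ j ∈ Finset.range n, apEps (n+1) (j+1)
        - ∑ j ∈ Finset.range n, apEps n (j+1)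
        = apLmb (n+1) 0 - apLmb (n+1) n := by
      rw [← Finset.sum_sub_distrib, ← Finset.sum_range_sub' (fun k => apLmb (n+1) k) n]
      refine Finset.sum_congr rfl fun j hj => ?_
      obtain ⟨m, rfl⟩ : ∃ m, n = j + m + 1 := by
        refine ⟨n - j - 1, ?_⟩
        have := Finset.mem_range.mp hj
        omega
      exact apCore j m
    have hb := apBdry n
    have h0 := apLmb_zero n
    push_cast
    push_cast at hb h0
    linarith [htel]

lemma apNatIneq (N k : ℕ) (h1 : 1 ≤ k) (h2 : k ≤ N) :
    (N+1) * (k.factorial * k.factorial * (N-k).factorial) ≤ (N+k).factorial := by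
  have hfac : k.factorial * (N-k).factorial ≤ N.factorial := by
    have hc := Nat.choose_mul_factorial_mul_factorial h2
    have hpos : 1 ≤ N.choose k := Nat.choose_pos h2
    calc k.factorial * (N-k).factorial
        = 1 * (k.factorial * (N-k).factorial) := (one_mul _).symm
      _ ≤ N.choose k * (k.factorial * (N-k).factorial) :=
          Nat.mul_le_mul_right _ hpos
      _ = N.factorial := by rw [← hc]; ring
  have haux : ∀ k, 1 ≤ k → (N+1) * (k.factorial * N.factorial) ≤ (N+k).factorial := by
    intro k hk
    induction k with
    | zero => omega
    | succ m ihm =>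
      rcases Nat.eq_zero_or_pos m with hm | hm
      · subst hm
        simp [Nat.factorial]
      · have hih := ihm hm
        calc (N+1) * ((m+1).factorial * N.factorial)
            = (m+1) * ((N+1) * (m.factorial * N.factorial)) := by
              rw [Nat.factorial_succ]; ring
          _ ≤ (m+1) * (N+m).factorial := Nat.mul_le_mul_left _ hih
          _ ≤ (N+m+1) * (N+m).factorial := Nat.mul_le_mul_right _ (by omega)
          _ = (N+(m+1)).factorial := by
              rw [show N+(m+1) = (N+m)+1 by omega, Nat.factorial_succ]
  calc (N+1) * (k.factorial * k.factorial * (N-k).factorial)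
      = (N+1) * (k.factorial * (k.factorial * (N-k).factorial)) := by ring
    _ ≤ (N+1) * (k.factorial * N.factorial) :=
        Nat.mul_le_mul_left _ (Nat.mul_le_mul_left _ hfac)
    _ ≤ (N+k).factorial := haux k h1

lemma apEpsBound (N j : ℕ) (h : j < N) :
    |apEps N (j+1)| ≤ (1 / ((j:ℝ)+1)^3) * (1 / ((N:ℝ)+1)) := by
  have hkey := apNatIneq N (j+1) (by omega) (by omega)
  have hkeyR : ((N:ℝ)+1) * (((j+1).factorial : ℝ) * ((j+1).factorial : ℝ)
      * (((N-(j+1)).factorial : ℝ))) ≤ (((N+(j+1)).factorial : ℝ)) := by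
    exact_mod_cast hkey
  have habs : |apEps N (j+1)| =
      ((j+1).factorial : ℝ)^2 * (((N-(j+1)).factorial : ℝ)) /
        (2 * ((j:ℝ)+1)^3 * (((N+(j+1)).factorial : ℝ))) := by
    rw [apEps, abs_div, abs_mul, abs_mul, abs_pow, abs_neg, abs_one, one_pow, one_mul]
    rw [abs_of_nonneg (by positivity : (0:ℝ) ≤ ((j+1).factorial : ℝ)^2),
        abs_of_nonneg (by positivity : (0:ℝ) ≤ (((N-(j+1)).factorial : ℝ)))]
    rw [abs_of_nonneg (by positivity : (0:ℝ) ≤ 2 * ((j+1:ℕ):ℝ)^3 * (((N+(j+1)).factorial : ℝ)))]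
    push_cast
    ring
  rw [habs, div_le_iff₀ (by positivity)]
  have hF : (0:ℝ) < (((N+(j+1)).factorial : ℝ)) := by positivity
  have hNj : (0:ℝ) < ((j:ℝ)+1)^3 := by positivity
  have hN1 : (0:ℝ) < ((N:ℝ)+1) := by positivity
  rw [show (1 / ((j:ℝ)+1)^3) * (1 / ((N:ℝ)+1)) * (2 * ((j:ℝ)+1)^3 * (((N+(j+1)).factorial : ℝ)))
      = 2 * (((N+(j+1)).factorial : ℝ)) / ((N:ℝ)+1) by field_simp]
  rw [le_div_iff₀ hN1]
  nlinarith [hkeyR, hF]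

theorem zeta_three_apery :
    (∑' k : ℕ, 1 / ((k:ℝ)+1)^3) =
      (5/2) * ∑' k : ℕ, (-1)^k / (((k:ℝ)+1)^3 * ((2*(k+1)).choose (k+1))) := by
  have hsum1 : Summable (fun j : ℕ => 1 / ((j:ℝ)+1)^3) := by
    have := Real.summable_one_div_nat_pow.mpr (show 1 < 3 by norm_num)
    have h2 := (summable_nat_add_iff 1).mpr this
    refine h2.congr fun n => ?_
    push_cast
    ring
  have hsum2 : Summable (fun j : ℕ => (-1:ℝ)^j / (((j:ℝ)+1)^3 * ((2*(j+1)).choose (j+1)))) := by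
    refine Summable.of_norm_bounded hsum1 fun j => ?_
    have hch : (1:ℝ) ≤ (((2*(j+1)).choose (j+1) : ℕ) : ℝ) := by
      exact_mod_cast Nat.one_le_iff_ne_zero.mpr (Nat.choose_pos (by omega)).ne'
    rw [norm_div, norm_pow, norm_neg, norm_one, one_pow]
    rw [Real.norm_eq_abs, abs_of_nonneg (by positivity : (0:ℝ) ≤ ((j:ℝ)+1)^3 * (((2*(j+1)).choose (j+1) : ℕ) : ℝ))]
    rw [div_le_div_iff₀ (by positivity) (by positivity)]
    nlinarith [pow_pos (show (0:ℝ) < (j:ℝ)+1 by positivity) 3]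
  have h1 := hsum1.hasSum.tendsto_sum_nat
  have h2 := hsum2.hasSum.tendsto_sum_nat
  set L := ∑' k : ℕ, 1 / ((k:ℝ)+1)^3 with hL
  set A := ∑' k : ℕ, (-1:ℝ)^k / (((k:ℝ)+1)^3 * ((2*(k+1)).choose (k+1))) with hA
  have hcomb : Filter.Tendsto
      (fun N => ∑ j ∈ Finset.range N, (1:ℝ)/((j:ℝ)+1)^3
        - (5/2) * ∑ j ∈ Finset.range N, ((-1:ℝ)^j / (((j:ℝ)+1)^3 * ((2*(j+1)).choose (j+1)))))
      Filter.atTop (nhds (L - (5/2) * A)) := h1.sub (h2.const_mul _)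
  have heq : (fun N => ∑ j ∈ Finset.range N, (1:ℝ)/((j:ℝ)+1)^3
        - (5/2) * ∑ j ∈ Finset.range N, ((-1:ℝ)^j / (((j:ℝ)+1)^3 * ((2*(j+1)).choose (j+1)))))
      = fun N => ∑ j ∈ Finset.range N, apEps N (j+1) := by
    funext N
    have := apKey N
    linarith
  rw [heq] at hcomb
  have hE0 : Filter.Tendsto (fun N => ∑ j ∈ Finset.range N, apEps N (j+1))
      Filter.atTop (nhds 0) := by
    have hbnd : ∀ N : ℕ, ‖∑ j ∈ Finset.range N, apEps N (j+1)‖ ≤ L * (1 / ((N:ℝ)+1)) := by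
      intro N
      calc ‖∑ j ∈ Finset.range N, apEps N (j+1)‖
          ≤ ∑ j ∈ Finset.range N, |apEps N (j+1)| := by
            simpa using norm_sum_le (Finset.range N) (fun j => apEps N (j+1))
        _ ≤ ∑ j ∈ Finset.range N, (1 / ((j:ℝ)+1)^3) * (1/((N:ℝ)+1)) := by
            refine Finset.sum_le_sum fun j hj => apEpsBound N j (Finset.mem_range.mp hj)
        _ = (∑ j ∈ Finset.range N, 1 / ((j:ℝ)+1)^3) * (1/((N:ℝ)+1)) := by
            rw [Finset.sum_mul]
        _ ≤ L * (1/((N:ℝ)+1)) := by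
            have hle : (∑ j ∈ Finset.range N, 1 / ((j:ℝ)+1)^3) ≤ L :=
              Summable.sum_le_tsum (Finset.range N) (fun j _ => by positivity) hsum1
            have hpos : (0:ℝ) ≤ 1/((N:ℝ)+1) := by positivity
            exact mul_le_mul_of_nonneg_right hle hpos
    have hg : Filter.Tendsto (fun N : ℕ => L * (1 / ((N:ℝ)+1))) Filter.atTop (nhds 0) := by
      have := tendsto_one_div_add_atTop_nhds_zero_nat (𝕜 := ℝ)
      have h := this.const_mul L
      simpa using h
    exact squeeze_zero_norm hbnd hg
  have := tendsto_nhds_unique hcomb hE0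
  linarith
end
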